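/- Let c ≥ 8 and m ≥ c. Every c-partite tournament that is a member of the family 𝒬_m = 𝒬^1_m ∪ 𝒬^2_m contains no (c+2)-cycle. -/

import Mathlib

namespace MPT

variable {V : Type*}

/-- `D` together with the partition map `part : V → Fin c` is a `c`-partite tournament:
no arcs inside a partite set, and exactly one arc between any two vertices in
different partite sets. -/
structure IsCPT (D : Digraph V) (c : ℕ) (part : V → Fin c) : Prop where
  part_surj : Function.Surjective part
  not_adj_of_same : ∀ x y : V, part x = part y → ¬ D.Adj x y
  xor_adj : ∀ x y : V, part x ≠ part y → Xor' (D.Adj x y) (D.Adj y x)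

/-- `f 0, f 1, …, f n` is a directed walk of length `n` from `x` to `y` in `D`. -/
def IsWalk (D : Digraph V) (n : ℕ) (f : ℕ → V) (x y : V) : Prop :=
  f 0 = x ∧ f n = y ∧ ∀ i < n, D.Adj (f i) (f (i + 1))

/-- A digraph is strong if each vertex can reach each other vertex by a directed path. -/
def IsStrong (D : Digraph V) : Prop :=
  ∀ x y : V, x ≠ y → ∃ (n : ℕ) (f : ℕ → V), IsWalk D n f x y

/-- A `c`-partite tournament is rich if it is strong and every partite set has at
least two vertices. -/
def IsRich (D : Digraph V) (c : ℕ) (part : V → Fin c) : Prop :=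
  IsStrong D ∧ ∀ p : Fin c, ∃ u v : V, u ≠ v ∧ part u = p ∧ part v = p

/-- `D` contains a directed cycle with exactly `q` arcs (through `q` distinct vertices). -/
def HasCycle (D : Digraph V) (q : ℕ) : Prop :=
  ∃ f : ZMod q → V, Function.Injective f ∧ ∀ i : ZMod q, D.Adj (f i) (f (i + 1))

/-- The distance from `x` to `y`: the length of a shortest directed path. -/
noncomputable def dist (D : Digraph V) (x y : V) : ℕ :=
  sInf {n : ℕ | ∃ f : ℕ → V, IsWalk D n f x y}

/-- `{i, j} ≡ {s, t} (mod n)` as unordered pairs of residues. -/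
def ModEqPair (n i j s t : ℕ) : Prop :=
  (i ≡ s [MOD n] ∧ j ≡ t [MOD n]) ∨ (i ≡ t [MOD n] ∧ j ≡ s [MOD n])

/-- The arc rule of `Q¹_m` at the level of path indices: an arc from `x_i` to `x_j`
iff `j = i + 1`, or `i - j > 1` and `i ≢ j (mod c+1)`; with all arcs between the
residue classes of `s` and `t` (mod `c+1`) deleted. -/
def QArc (c s t i j : ℕ) : Prop :=
  (j = i + 1 ∨ (j + 1 < i ∧ ¬ i ≡ j [MOD c + 1])) ∧ ¬ ModEqPair (c + 1) i j s t

/-- The indices of `Q¹_m` that may be blown up into a larger independent set. -/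
def QBlowup (c m s t i : ℕ) : Prop :=
  i = 1 ∨ i = 2 ∨ i = m - 1 ∨ i = m ∨
  (s = 1 ∧ (t = 3 ∨ t = 4) ∧ i = t) ∨
  (i = m - 2 ∧ ModEqPair (c + 1) m (m - 2) s t) ∨
  (i = m - 3 ∧ ModEqPair (c + 1) m (m - 3) s t)

/-- `D` is obtained from the path-indexed digraph with arc rule `arc` on indices
`1, …, m` by replacing index `i` with an independent vertex set `A i`, where only
indices satisfying `allowed` may receive more than one vertex. -/
def IsBlowupOf (D : Digraph V) (m : ℕ) (arc : ℕ → ℕ → Prop) (allowed : ℕ → Prop) : Prop :=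
  ∃ A : ℕ → Set V,
    (∀ v : V, ∃ i, 1 ≤ i ∧ i ≤ m ∧ v ∈ A i) ∧
    (∀ i j, i ≠ j → Disjoint (A i) (A j)) ∧
    (∀ i, 1 ≤ i → i ≤ m → (A i).Nonempty) ∧
    (∀ i, 1 ≤ i → i ≤ m → ¬ allowed i → (A i).Subsingleton) ∧
    (∀ i j, 1 ≤ i → i ≤ m → 1 ≤ j → j ≤ m →
      ∀ u ∈ A i, ∀ w ∈ A j, (D.Adj u w ↔ arc i j))

/-- Membership in the family `𝒬¹_m`. -/
def IsInQ1 (D : Digraph V) (c m : ℕ) : Prop :=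
  ∃ s t : ℕ, 1 ≤ s ∧ s + 1 < t ∧ t ≤ c + 1 ∧
    IsBlowupOf D m (QArc c s t) (QBlowup c m s t)

/-- The four cases in which arcs between `A a` and `A b` get reversed to form `𝒬²_m`. -/
def QRevCase (c m s t a b : ℕ) : Prop :=
  (t = 3 ∧ s = 1 ∧ a = 2 ∧ b = 3) ∨
  (t = c + 1 ∧ s = 2 ∧ a = 1 ∧ b = 2) ∨
  (ModEqPair (c + 1) (m - 2) m s t ∧ a = m - 2 ∧ b = m - 1) ∨
  (ModEqPair (c + 1) (m - 1) (m - c) s t ∧ a = m - 1 ∧ b = m)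

/-- The arc rule obtained from `QArc` by reversing all arcs from index `a` to index `b`. -/
def QArcRev (c s t a b i j : ℕ) : Prop :=
  ((¬(i = a ∧ j = b) ∧ ¬(i = b ∧ j = a)) ∧ QArc c s t i j) ∨
  ((i = b ∧ j = a) ∧ QArc c s t a b)

/-- Membership in the family `𝒬²_m`. -/
def IsInQ2 (D : Digraph V) (c m : ℕ) : Prop :=
  ∃ s t a b : ℕ, 1 ≤ s ∧ s + 1 < t ∧ t ≤ c + 1 ∧ QRevCase c m s t a b ∧
    IsBlowupOf D m (QArcRev c s t a b) (QBlowup c m s t)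

/-- Membership in the family `𝒬_m = 𝒬¹_m ∪ 𝒬²_m`. -/
def IsInQ (D : Digraph V) (c m : ℕ) : Prop :=
  IsInQ1 D c m ∨ IsInQ2 D c m

/-- The arc rule of `W_m`: an arc from `x_i` to `x_j` iff `j = i + 1`, or
`i - j > 1` and `i ≢ j (mod c)`. -/
def WArc (c i j : ℕ) : Prop :=
  j = i + 1 ∨ (j + 1 < i ∧ ¬ i ≡ j [MOD c])

/-- The indices of `W_m` that are blown up (into sets of size at least two). -/
def WBlowup (m i : ℕ) : Prop :=
  i = 1 ∨ i = 2 ∨ i = m - 1 ∨ i = m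

/-- Membership in the family `𝒲_m`. -/
def IsInW (D : Digraph V) (c m : ℕ) : Prop :=
  ∃ A : ℕ → Set V,
    (∀ v : V, ∃ i, 1 ≤ i ∧ i ≤ m ∧ v ∈ A i) ∧
    (∀ i j, i ≠ j → Disjoint (A i) (A j)) ∧
    (∀ i, 1 ≤ i → i ≤ m → (A i).Nonempty) ∧
    (∀ i, 1 ≤ i → i ≤ m → WBlowup m i → ∃ u ∈ A i, ∃ w ∈ A i, u ≠ w) ∧
    (∀ i, 1 ≤ i → i ≤ m → ¬ WBlowup m i → (A i).Subsingleton) ∧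
    (∀ i j, 1 ≤ i → i ≤ m → 1 ≤ j → j ≤ m →
      ∀ u ∈ A i, ∀ w ∈ A j, (D.Adj u w ↔ WArc c i j))

/-- Membership in the family `ℋ`: there is an index `i` with `2 < i < c - 1`,
partite sets `W 2, …, W (c+1)` (with `W i` possibly of size one and all others of
size at least two) and a distinguished extra vertex `v1`, such that every vertex of
`W j₁` dominates every vertex of `W j₂` for `2 ≤ j₁ < j₂ ≤ c + 1`, there are no arcs
inside a `W j` nor between `v1` and `W i`, and between `v1` and each vertex of each
`W j` (`j ≠ i`) there is exactly one arc of arbitrary direction. -/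
def IsInH (D : Digraph V) (c : ℕ) : Prop :=
  ∃ i : ℕ, 2 < i ∧ i + 1 < c ∧
  ∃ (W : ℕ → Set V) (v1 : V),
    (∀ v : V, v = v1 ∨ ∃ j, 2 ≤ j ∧ j ≤ c + 1 ∧ v ∈ W j) ∧
    (∀ j, 2 ≤ j → j ≤ c + 1 → v1 ∉ W j) ∧
    (∀ j k, 2 ≤ j → j ≤ c + 1 → 2 ≤ k → k ≤ c + 1 → j ≠ k → Disjoint (W j) (W k)) ∧
    (W i).Nonempty ∧
    (∀ j, 2 ≤ j → j ≤ c + 1 → j ≠ i → ∃ u ∈ W j, ∃ w ∈ W j, u ≠ w) ∧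
    (∀ j k, 2 ≤ j → j < k → k ≤ c + 1 → ∀ u ∈ W j, ∀ w ∈ W k, D.Adj u w ∧ ¬ D.Adj w u) ∧
    (∀ j, 2 ≤ j → j ≤ c + 1 → ∀ u ∈ W j, ∀ w ∈ W j, ¬ D.Adj u w) ∧
    (∀ j, 2 ≤ j → j ≤ c + 1 → j ≠ i → ∀ u ∈ W j, Xor' (D.Adj v1 u) (D.Adj u v1)) ∧
    (∀ u ∈ W i, ¬ D.Adj v1 u ∧ ¬ D.Adj u v1) ∧
    ¬ D.Adj v1 v1

end MPT

open MPT


private lemma modeq_bounds {n a b : ℕ} (h : Nat.ModEq n a b) (h1 : a < b) (h2 : b < a + n) :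
    False := by
  have hd := (Nat.modEq_iff_dvd' h1.le).mp h
  have := Nat.le_of_dvd (by omega) hd
  omega

private lemma offs_ne {c : ℕ} (p : ZMod (c+2)) {o₁ o₂ : ℕ} (h₁ : o₁ < o₂) (h₂ : o₂ < c+2) :
    p + ((o₁ : ℕ) : ZMod (c+2)) ≠ p + ((o₂ : ℕ) : ZMod (c+2)) := by
  haveI : NeZero (c+2) := ⟨by omega⟩
  intro h
  have h3 : ((o₁ : ℕ) : ZMod (c+2)) = ((o₂ : ℕ) : ZMod (c+2)) := add_left_cancel h
  have h4 := congrArg ZMod.val h3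
  rw [ZMod.val_cast_of_lt (by omega), ZMod.val_cast_of_lt h₂] at h4
  omega

private lemma cross_up {c s t : ℕ} {g : ZMod (c+2) → ℕ}
    (hstep : ∀ p, QArc c s t (g p) (g (p+1)))
    (v : ℕ) (p : ZMod (c+2)) (k : ℕ) :
    g p ≤ v → v < g (p + ((k : ℕ) : ZMod (c+2))) →
    ∃ j : ℕ, j < k ∧ g (p + ((j : ℕ) : ZMod (c+2))) = v ∧
      g (p + ((j : ℕ) : ZMod (c+2)) + 1) = v + 1 := by
  induction k with
  | zero => intro h1 h2; simp only [Nat.cast_zero, add_zero] at h2; omega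
  | succ k ih =>
    intro h1 h2
    rcases le_or_gt (g (p + ((k : ℕ) : ZMod (c+2)))) v with hk | hk
    · refine ⟨k, by omega, ?_⟩
      have hcast : p + (((k+1 : ℕ) : ℕ) : ZMod (c+2)) = p + ((k : ℕ) : ZMod (c+2)) + 1 := by
        push_cast; ring
      rw [hcast] at h2
      rcases (hstep (p + ((k : ℕ) : ZMod (c+2)))).1 with hup | hdn
      · constructor <;> omega
      · omega
    · obtain ⟨j, hj, hgj⟩ := ih h1 hk
      exact ⟨j, by omega, hgj⟩

-- given a "down" arc at p and some vertex above g p, index g p must be a blowup index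
private lemma depart_mem {c s t m M : ℕ} {g : ZMod (c+2) → ℕ}
    (hstep : ∀ p, QArc c s t (g p) (g (p+1)))
    (hrep : ∀ p q, p ≠ q → g p = g q → QBlowup c m s t (g p))
    (hMex : ∃ q, g q = M)
    {p : ZMod (c+2)} (hdn : g (p+1) + 2 ≤ g p) (hlt : g p < M) :
    QBlowup c m s t (g p) := by
  haveI : NeZero (c+2) := ⟨by omega⟩
  obtain ⟨pM, hpM⟩ := hMex
  have hM2 : p + (((pM - p).val : ℕ) : ZMod (c+2)) = pM := by
    rw [ZMod.natCast_zmod_val]; ring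
  obtain ⟨j, hj, e₁, e₁'⟩ := cross_up hstep (g p) p (pM - p).val le_rfl
    (by rw [hM2, hpM]; exact hlt)
  have hjpos : 0 < j := by
    rcases Nat.eq_zero_or_pos j with h0 | h; swap; exact h
    exfalso
    rw [h0] at e₁'
    simp only [Nat.cast_zero, add_zero] at e₁'
    omega
  have hjlt : j < c + 2 := lt_of_lt_of_le hj (le_of_lt (ZMod.val_lt _))
  have hne : p + ((j : ℕ) : ZMod (c+2)) ≠ p := by
    intro h
    exact offs_ne p (show 0 < j from hjpos) hjlt
      (by rw [h]; simp)
  have := hrep _ _ hne e₁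
  rwa [e₁] at this

-- given a "down" arc at p and some vertex below g (p+1), index g (p+1) must be a blowup index
private lemma land_mem {c s t m μ : ℕ} {g : ZMod (c+2) → ℕ}
    (hstep : ∀ p, QArc c s t (g p) (g (p+1)))
    (hrep : ∀ p q, p ≠ q → g p = g q → QBlowup c m s t (g p))
    (hμex : ∃ q, g q = μ)
    {p : ZMod (c+2)} (hdn : g (p+1) + 2 ≤ g p) (hgt : μ < g (p+1)) :
    QBlowup c m s t (g (p+1)) := by
  haveI : NeZero (c+2) := ⟨by omega⟩
  obtain ⟨pμ, hpμ⟩ := hμex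
  have hM2 : pμ + (((p - pμ).val : ℕ) : ZMod (c+2)) = p := by
    rw [ZMod.natCast_zmod_val]; ring
  obtain ⟨j, hj, e₁, e₁'⟩ := cross_up hstep (g (p+1) - 1) pμ (p - pμ).val
    (by omega) (by rw [hM2]; omega)
  have e₂ : g (pμ + ((j : ℕ) : ZMod (c+2)) + 1) = g (p+1) := by omega
  have hne : pμ + ((j : ℕ) : ZMod (c+2)) + 1 ≠ p + 1 := by
    intro h
    have h2 : pμ + ((j : ℕ) : ZMod (c+2)) = p := by
      have := add_right_cancel h; exact this
    rw [h2] at e₁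
    omega
  have := hrep _ _ hne e₂
  rwa [e₂] at this

-- there exist two distinct "down" positions
private lemma two_dn {c s t : ℕ} (hc : 8 ≤ c) {g : ZMod (c+2) → ℕ}
    (hstep : ∀ p, QArc c s t (g p) (g (p+1))) :
    ∃ p₁ p₂ : ZMod (c+2), p₁ ≠ p₂ ∧ g (p₁+1) + 2 ≤ g p₁ ∧ g (p₂+1) + 2 ≤ g p₂ := by
  haveI : NeZero (c+2) := ⟨by omega⟩
  have chain : ∀ (p : ZMod (c+2)) (k : ℕ),
      (∀ j : ℕ, j < k → g (p + ((j : ℕ) : ZMod (c+2)) + 1) = g (p + ((j : ℕ) : ZMod (c+2))) + 1) →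
      g (p + ((k : ℕ) : ZMod (c+2))) = g p + k := by
    intro p k
    induction k with
    | zero => intro _; simp
    | succ k ih =>
      intro h
      have hk := ih (fun j hj => h j (by omega))
      have hcast : p + (((k+1 : ℕ) : ℕ) : ZMod (c+2)) = p + ((k : ℕ) : ZMod (c+2)) + 1 := by
        push_cast; ring
      rw [hcast, h k (by omega), hk]
      omega
  -- first: there is a down step
  have hdn1 : ∃ p₀ : ZMod (c+2), g (p₀+1) + 2 ≤ g p₀ := by
    by_contra h
    push_neg at h
    have hup : ∀ p : ZMod (c+2), g (p+1) = g p + 1 := by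
      intro p
      rcases (hstep p).1 with h1 | h1
      · exact h1
      · have := h p; omega
    have := chain 0 (c+2) (fun j _ => hup _)
    rw [show (((c+2 : ℕ) : ℕ) : ZMod (c+2)) = 0 from ZMod.natCast_self _] at this
    simp at this
  obtain ⟨p₀, hp₀⟩ := hdn1
  by_contra h
  push_neg at h
  have hall : ∀ p : ZMod (c+2), g (p+1) + 2 ≤ g p → p = p₀ := by
    intro p hp
    by_contra hne
    have := h p p₀ hne hp
    omega
  have hup : ∀ j : ℕ, j < c+1 → g ((p₀+1) + ((j : ℕ) : ZMod (c+2)) + 1)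
      = g ((p₀+1) + ((j : ℕ) : ZMod (c+2))) + 1 := by
    intro j hj
    rcases (hstep ((p₀+1) + ((j : ℕ) : ZMod (c+2)))).1 with h1 | h1
    · exact h1
    · exfalso
      have hne : (p₀+1) + ((j : ℕ) : ZMod (c+2)) ≠ p₀ := by
        have : (p₀+1) + ((j : ℕ) : ZMod (c+2)) = p₀ + (((1+j : ℕ) : ℕ) : ZMod (c+2)) := by
          push_cast; ring
        rw [this]
        intro hcontra
        exact offs_ne p₀ (show 0 < 1 + j by omega) (show 1 + j < c+2 by omega)
          (by rw [hcontra]; simp)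
      have := hall ((p₀+1) + ((j : ℕ) : ZMod (c+2))) (by omega)
      exact hne this
  have hchain := chain (p₀+1) (c+1) hup
  have hwrap : (p₀+1) + (((c+1 : ℕ) : ℕ) : ZMod (c+2)) = p₀ := by
    have : (((c+2 : ℕ) : ℕ) : ZMod (c+2)) = 0 := ZMod.natCast_self _
    push_cast at this ⊢
    linear_combination this
  rw [hwrap] at hchain
  -- g p₀ = g (p₀+1) + (c+1); contradicts the ModEq condition of the down step at p₀
  rcases (hstep p₀).1 with h1 | h1
  · omega
  · exact h1.2 (((Nat.modEq_iff_dvd' (by omega)).mpr ⟨1, by omega⟩).symm)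
private lemma double_cross {c s t m : ℕ} {g : ZMod (c+2) → ℕ}
    (hstep : ∀ p, QArc c s t (g p) (g (p+1)))
    (hrep : ∀ p q, p ≠ q → g p = g q → QBlowup c m s t (g p))
    {p₁ p₂ : ZMod (c+2)} (h12 : p₁ ≠ p₂) {v : ℕ}
    (ha1 : g (p₁+1) ≤ v) (hb1 : v < g p₁) (ha2 : g (p₂+1) ≤ v) (hb2 : v < g p₂) :
    QBlowup c m s t v ∧ QBlowup c m s t (v+1) := by
  haveI : NeZero (c+2) := ⟨by omega⟩
  set x := p₂ - (p₁ + 1) with hx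
  set y := p₁ - (p₂ + 1) with hy
  have hx1 : p₁ + 1 + x = p₂ := by rw [hx]; ring
  have hy1 : p₂ + 1 + y = p₁ := by rw [hy]; ring
  have hxv : x.val < c+2 := ZMod.val_lt x
  have hyv : y.val < c+2 := ZMod.val_lt y
  have hc0 : ((c : ℕ) : ZMod (c+2)) + 2 = 0 := by
    have := ZMod.natCast_self (c+2); push_cast at this; linear_combination this
  have hkey : x.val + y.val = c := by
    have hcast : ((x.val + y.val : ℕ) : ZMod (c+2)) = ((c : ℕ) : ZMod (c+2)) := by
      push_cast
      rw [ZMod.natCast_zmod_val, ZMod.natCast_zmod_val]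
      have hxy : x + y = -2 := by rw [hx, hy]; ring
      rw [hxy]; linear_combination -hc0
    have hmod : Nat.ModEq (c+2) (x.val + y.val) c := (ZMod.natCast_eq_natCast_iff _ _ _).mp hcast
    rcases Nat.lt_or_ge (x.val + y.val) (c+2) with hlt | hge
    · have h := hmod
      unfold Nat.ModEq at h
      rw [Nat.mod_eq_of_lt hlt, Nat.mod_eq_of_lt (by omega)] at h
      omega
    · exfalso
      obtain ⟨k, hk⟩ := (Nat.modEq_iff_dvd' (by omega : c ≤ x.val + y.val)).mp hmod.symm
      have hkle : k ≤ 1 := by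
        by_contra h
        have h2 : 2 ≤ k := by omega
        have : (c+2) * 2 ≤ (c+2) * k := Nat.mul_le_mul_left _ h2
        omega
      interval_cases k
      · omega
      · have hxv1 : x.val = c + 1 := by omega
        apply h12
        have hxx : x = ((c+1 : ℕ) : ZMod (c+2)) := by rw [← hxv1, ZMod.natCast_zmod_val]
        rw [hxx] at hx1
        rw [← hx1]
        have hm1 : ((c+1 : ℕ) : ZMod (c+2)) = -1 := by push_cast; linear_combination hc0
        rw [hm1]; ring
  have e2 : p₁ + 1 + ((x.val : ℕ) : ZMod (c+2)) = p₂ := by rw [ZMod.natCast_zmod_val]; exact hx1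
  obtain ⟨j₁, hj₁, e₁, e₁'⟩ := cross_up hstep v (p₁+1) x.val ha1 (by rw [e2]; exact hb2)
  have e3 : p₂ + 1 + ((y.val : ℕ) : ZMod (c+2)) = p₁ := by rw [ZMod.natCast_zmod_val]; exact hy1
  obtain ⟨j₂, hj₂, e₄, e₄'⟩ := cross_up hstep v (p₂+1) y.val ha2 (by rw [e3]; exact hb1)
  have hq₁ : p₁ + 1 + ((j₁ : ℕ) : ZMod (c+2)) = p₁ + (((1 + j₁ : ℕ) : ℕ) : ZMod (c+2)) := by
    push_cast; ring
  have hq₂ : p₂ + 1 + ((j₂ : ℕ) : ZMod (c+2))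
      = p₁ + (((x.val + 2 + j₂ : ℕ) : ℕ) : ZMod (c+2)) := by
    rw [← e2]; push_cast; ring
  rw [hq₁] at e₁ e₁'
  rw [hq₂] at e₄ e₄'
  have hne : p₁ + (((1 + j₁ : ℕ) : ℕ) : ZMod (c+2)) ≠ p₁ + (((x.val + 2 + j₂ : ℕ) : ℕ) : ZMod (c+2)) :=
    offs_ne p₁ (by omega) (by omega)
  constructor
  · have := hrep _ _ hne (by rw [e₁, e₄])
    rwa [e₁] at this
  · have hs₁ : p₁ + (((1 + j₁ : ℕ) : ℕ) : ZMod (c+2)) + 1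
        = p₁ + (((2 + j₁ : ℕ) : ℕ) : ZMod (c+2)) := by push_cast; ring
    rw [hs₁] at e₁'
    rcases Nat.lt_or_ge (x.val + 3 + j₂) (c+2) with hlt | hge
    · have hs₂ : p₁ + (((x.val + 2 + j₂ : ℕ) : ℕ) : ZMod (c+2)) + 1
          = p₁ + (((x.val + 3 + j₂ : ℕ) : ℕ) : ZMod (c+2)) := by push_cast; ring
      rw [hs₂] at e₄'
      have hne' : p₁ + (((2 + j₁ : ℕ) : ℕ) : ZMod (c+2))
          ≠ p₁ + (((x.val + 3 + j₂ : ℕ) : ℕ) : ZMod (c+2)) :=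
        offs_ne p₁ (by omega) hlt
      have := hrep _ _ hne' (by rw [e₁', e₄'])
      rwa [e₁'] at this
    · have hs₂ : p₁ + (((x.val + 2 + j₂ : ℕ) : ℕ) : ZMod (c+2)) + 1
          = p₁ + ((0 : ℕ) : ZMod (c+2)) := by
        have h0 : ((x.val + 2 + j₂ + 1 : ℕ) : ZMod (c+2)) = ((0 : ℕ) : ZMod (c+2)) := by
          rw [show x.val + 2 + j₂ + 1 = c + 2 by omega]
          simp
        push_cast at h0 ⊢
        linear_combination h0
      rw [hs₂] at e₄'
      have hne' : p₁ + (((2 + j₁ : ℕ) : ℕ) : ZMod (c+2)) ≠ p₁ + ((0 : ℕ) : ZMod (c+2)) := by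
        intro h
        exact offs_ne p₁ (show 0 < 2 + j₁ by omega) (show 2 + j₁ < c + 2 by omega) h.symm
      have := hrep _ _ hne' (by rw [e₁', e₄'])
      rwa [e₁'] at this
section Bhelp
variable {c m s t : ℕ}

private lemma B_small (hm8 : 8 ≤ m) {v : ℕ} (hB : QBlowup c m s t v) (hv : v ≤ 4) :
    v = 1 ∨ v = 2 ∨ (s = 1 ∧ (t = 3 ∨ t = 4) ∧ v = t) := by
  rcases hB with h|h|h|h|⟨h1,h2,h3⟩|⟨h,_⟩|⟨h,_⟩ <;> first | omega | exact Or.inr (Or.inr ⟨h1,h2,h3⟩)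

private lemma B_big (hm8 : 8 ≤ m) {v : ℕ} (hB : QBlowup c m s t v) (hv : 5 ≤ v) :
    v + 1 = m ∨ v = m ∨ (v + 2 = m ∧ ModEqPair (c+1) m (m-2) s t) ∨
      (v + 3 = m ∧ ModEqPair (c+1) m (m-3) s t) := by
  rcases hB with h|h|h|h|⟨h1,h2,h3⟩|⟨h1,h2⟩|⟨h1,h2⟩
  · omega
  · omega
  · left; omega
  · right; left; omega
  · omega
  · right; right; left; exact ⟨by omega, h2⟩
  · right; right; right; exact ⟨by omega, h2⟩

private lemma B_dichot (hm8 : 8 ≤ m) {v : ℕ} (hB : QBlowup c m s t v) :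
    v ≤ 4 ∨ m ≤ v + 3 := by
  rcases hB with h|h|h|h|⟨h1,h2,h3⟩|⟨h,_⟩|⟨h,_⟩ <;> omega

private lemma B3E (hm8 : 8 ≤ m) (hB : QBlowup c m s t 3) : s = 1 ∧ t = 3 := by
  rcases hB with h|h|h|h|⟨h1,h2,h3⟩|⟨h,_⟩|⟨h,_⟩ <;> omega

private lemma B4E (hm8 : 8 ≤ m) (hB : QBlowup c m s t 4) : s = 1 ∧ t = 4 := by
  rcases hB with h|h|h|h|⟨h1,h2,h3⟩|⟨h,_⟩|⟨h,_⟩ <;> omega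

private lemma B_mid_none (hm8 : 8 ≤ m) {v : ℕ} (h5 : 5 ≤ v) (h4 : v + 4 ≤ m) :
    ¬ QBlowup c m s t v := by
  intro hB
  rcases hB with h|h|h|h|⟨h1,h2,h3⟩|⟨h,_⟩|⟨h,_⟩ <;> omega

private lemma pair_31 (hs1 : s = 1) (ht3 : t = 3) : ModEqPair (c+1) 3 1 s t :=
  Or.inr ⟨by rw [ht3], by rw [hs1]⟩

private lemma pair_41 (hs1 : s = 1) (ht4 : t = 4) : ModEqPair (c+1) 4 1 s t :=
  Or.inr ⟨by rw [ht4], by rw [hs1]⟩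

private lemma pair_c24 (hs1 : s = 1) (ht4 : t = 4) : ModEqPair (c+1) (c+2) 4 s t := by
  refine Or.inl ⟨?_, by rw [ht4]⟩
  rw [hs1]
  show (c+2) % (c+1) = 1 % (c+1)
  conv_lhs => rw [show c + 2 = (c+1) + 1 by ring]
  exact Nat.add_mod_left _ _

private lemma pair_mm3_to (hm8 : 8 ≤ m) (h : ModEqPair (c+1) m (m-3) s t) {w : ℕ}
    (hmod : Nat.ModEq (c+1) w m) : ModEqPair (c+1) (m-3) w s t := by
  rcases h with ⟨h1, h2⟩ | ⟨h1, h2⟩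
  · exact Or.inr ⟨h2, hmod.trans h1⟩
  · exact Or.inl ⟨h2, hmod.trans h1⟩

private lemma pair_not_both (hc : 8 ≤ c) (hm8 : 8 ≤ m) (hs : 1 ≤ s) (hst : s + 1 < t)
    (ht : t ≤ c + 1) (h2 : ModEqPair (c+1) m (m-2) s t) (h3 : ModEqPair (c+1) m (m-3) s t) :
    False := by
  rcases h2 with ⟨a1, a2⟩ | ⟨a1, a2⟩ <;> rcases h3 with ⟨b1, b2⟩ | ⟨b1, b2⟩
  · exact modeq_bounds (b2.trans a2.symm) (by omega) (by omega)
  · exact modeq_bounds (a1.symm.trans b1) (by omega) (by omega)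
  · exact modeq_bounds (b1.symm.trans a1) (by omega) (by omega)
  · exact modeq_bounds (b2.trans a2.symm) (by omega) (by omega)

private lemma pair_m4 (hc : 8 ≤ c) (hm8 : 8 ≤ m) (hs1 : s = 1) (ht4 : t = 4)
    (h : ModEqPair (c+1) m (m-3) s t) : Nat.ModEq (c+1) m 4 := by
  rcases h with ⟨h1, h2⟩ | ⟨h1, h2⟩
  · exfalso
    have h3 : Nat.ModEq (c+1) m 7 := by
      have h4 := h2.add_right 3
      rw [show m - 3 + 3 = m by omega, ht4] at h4
      simpa using h4
    rw [hs1] at h1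
    exact modeq_bounds (h1.symm.trans h3) (by omega) (by omega)
  · rw [ht4] at h1; exact h1
end Bhelp
private lemma sum_walk {c : ℕ} (g : ZMod (c+2) → ℕ) (S : Finset (ZMod (c+2)))
    (hup : ∀ p ∉ S, g (p+1) = g p + 1) :
    ∑ p ∈ S, ((g p : ℤ) - g (p+1)) = (c + 2 : ℤ) - S.card := by
  haveI : NeZero (c+2) := ⟨by omega⟩
  have h1 : ∑ p : ZMod (c+2), (g (p+1) : ℤ) = ∑ p : ZMod (c+2), (g p : ℤ) :=
    Fintype.sum_equiv (Equiv.addRight (1 : ZMod (c+2))) _ _ (fun x => rfl)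
  have h0 : ∑ p : ZMod (c+2), ((g p : ℤ) - g (p+1)) = 0 := by
    rw [Finset.sum_sub_distrib, h1]; ring
  have h2 : ∑ p ∈ Sᶜ, ((g p : ℤ) - g (p+1)) = - (Sᶜ.card : ℤ) := by
    rw [Finset.sum_congr rfl (fun p hp => show ((g p : ℤ) - g (p+1)) = -1 by
      rw [hup p (Finset.mem_compl.mp hp)]; push_cast; ring)]
    rw [Finset.sum_const]; simp
  have h3 := Finset.sum_add_sum_compl S (fun p => ((g p : ℤ) - g (p+1)))
  rw [h0] at h3
  have hcard : Sᶜ.card = (c+2) - S.card := by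
    rw [Finset.card_compl]
    congr 1
    exact ZMod.card _
  have hle : S.card ≤ c + 2 := by
    have := Finset.card_le_univ S
    rwa [ZMod.card] at this
  rw [h2, hcard] at h3
  have : ((c + 2 - S.card : ℕ) : ℤ) = (c+2 : ℤ) - S.card := by
    rw [Nat.cast_sub hle]; push_cast; ring
  rw [this] at h3
  linarith


set_option maxHeartbeats 1000000 in
private lemma caseB {c m s t : ℕ} (hc : 8 ≤ c) (hm : c ≤ m)
    (hs : 1 ≤ s) (hst : s + 1 < t) (ht : t ≤ c + 1)
    {g : ZMod (c+2) → ℕ} (hlo : ∀ p, 1 ≤ g p) (hhi : ∀ p, g p ≤ m)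
    (hstep : ∀ p, QArc c s t (g p) (g (p+1)))
    (hrep : ∀ p q, p ≠ q → g p = g q → QBlowup c m s t (g p))
    {M μ : ℕ} (hMmax : ∀ p, g p ≤ M) (hμmin : ∀ p, μ ≤ g p)
    (hMex : ∃ p, g p = M) (hμex : ∃ p, g p = μ)
    {p₁ p₂ : ZMod (c+2)} (h12 : p₁ ≠ p₂)
    (hd1 : g (p₁+1) + 2 ≤ g p₁) (hd2 : g (p₂+1) + 2 ≤ g p₂)
    (hμ4 : μ ≤ 4) (hMlo : M + 4 ≤ m) : False := by
    have hm8 : 8 ≤ m := by omega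
    have hnp : ∀ p, ¬ ModEqPair (c+1) (g p) (g (p+1)) s t := fun p => (hstep p).2
    have hdep : ∀ p, g (p+1) + 2 ≤ g p → QBlowup c m s t (g p) ∨ g p = M := by
      intro p hdn
      rcases eq_or_lt_of_le (hMmax p) with h | h
      · exact Or.inr h
      · exact Or.inl (depart_mem hstep hrep hMex hdn h)
    have hland : ∀ p, g (p+1) + 2 ≤ g p → QBlowup c m s t (g (p+1)) ∨ g (p+1) = μ := by
      intro p hdn
      rcases eq_or_lt_of_le (hμmin (p+1)) with h | h
      · exact Or.inr h.symm
      · exact Or.inl (land_mem hstep hrep hμex hdn h)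
    have hμ1 : 1 ≤ μ := by obtain ⟨p, hp⟩ := hμex; have := hlo p; omega
    have hMm : M ≤ m := by obtain ⟨p, hp⟩ := hMex; have := hhi p; omega
    have hMge : μ + 2 ≤ M := by have := hμmin (p₁+1); have := hMmax p₁; omega
    have hcls : ∀ p, g (p+1) + 2 ≤ g p →
        (g p = 4 ∧ g (p+1) = 2 ∧ s = 1 ∧ t = 4) ∨ g p = M := by
      intro p hdn
      rcases hdep p hdn with hB | hM
      swap
      · exact Or.inr hM
      have h3 : 3 ≤ g p := by have := hlo (p+1); omega
      have hs4 : g p ≤ 4 := by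
        by_contra hgt
        exact B_mid_none hm8 (by omega) (by have := hMmax p; omega) hB
      rcases B_small hm8 hB hs4 with h|h|⟨hs1, ht34, hvt⟩
      · omega
      · omega
      rcases ht34 with ht3 | ht4
      · exfalso
        apply hnp p
        rw [show g p = 3 by omega, show g (p+1) = 1 by have := hlo (p+1); omega]
        exact pair_31 hs1 ht3
      · left
        refine ⟨by omega, ?_, hs1, ht4⟩
        rcases (show g (p+1) = 1 ∨ g (p+1) = 2 by have := hlo (p+1); omega) with h1 | h2
        · exfalso
          apply hnp p
          rw [show g p = 4 by omega, h1]
          exact pair_41 hs1 ht4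
        · exact h2
    by_cases hM4 : M ≤ 4
    · have e₁ : g p₁ = M := by
        rcases hcls p₁ hd1 with ⟨h,_⟩|h
        · have := hMmax p₁; omega
        · exact h
      have e₂ : g p₂ = M := by
        rcases hcls p₂ hd2 with ⟨h,_⟩|h
        · have := hMmax p₂; omega
        · exact h
      have hBM := hrep p₁ p₂ h12 (e₁.trans e₂.symm)
      rw [e₁] at hBM
      rcases B_small hm8 hBM (by omega) with h|h|⟨hs1, ht34, hvt⟩
      · omega
      · omega
      rcases ht34 with ht3 | ht4
      · apply hnp p₁
        rw [e₁, show M = 3 by omega, show g (p₁+1) = 1 by have := hlo (p₁+1); omega]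
        exact pair_31 hs1 ht3
      · have hM4' : M = 4 := by omega
        have hl1 : g (p₁+1) = 2 := by
          rcases (show g (p₁+1) = 1 ∨ g (p₁+1) = 2 by have := hlo (p₁+1); omega) with h1|h1
          · exfalso; apply hnp p₁; rw [e₁, hM4', h1]; exact pair_41 hs1 ht4
          · exact h1
        have hl2 : g (p₂+1) = 2 := by
          rcases (show g (p₂+1) = 1 ∨ g (p₂+1) = 2 by have := hlo (p₂+1); omega) with h1|h1
          · exfalso; apply hnp p₂; rw [e₂, hM4', h1]; exact pair_41 hs1 ht4
          · exact h1
        have hD := double_cross hstep hrep h12 (v := 3) (by omega) (by omega) (by omega)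
          (by omega)
        have := B3E hm8 hD.1
        omega
    · push_neg at hM4
      have hMnB : ¬ QBlowup c m s t M := B_mid_none hm8 (by omega) (by omega)
      have main : ∀ pL pM' : ZMod (c+2), pL ≠ pM' →
          g (pL+1) + 2 ≤ g pL → g (pM'+1) + 2 ≤ g pM' →
          (g pL = 4 ∧ g (pL+1) = 2 ∧ s = 1 ∧ t = 4) → g pM' = M → False := by
        intro pL pM' hne hdL hdM hLO hMM
        obtain ⟨hL4, hL2, hs1, ht4⟩ := hLO
        have hall : ∀ p, g (p+1) + 2 ≤ g p → p = pL ∨ p = pM' := by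
          intro p hdn
          rcases hcls p hdn with ⟨h4, h2', _, _⟩ | hMp
          · left
            by_contra hnep
            have hD := double_cross hstep hrep hnep (v := 3) (by omega) (by omega)
              (by omega) (by omega)
            have := B3E hm8 hD.1
            omega
          · right
            by_contra hnep
            have hx := hrep p pM' hnep (by rw [hMp, hMM])
            rw [hMp] at hx
            exact hMnB hx
        have hsum := sum_walk g {pL, pM'} (fun p hp => by
          rcases (hstep p).1 with h1 | h1
          · exact h1
          · exfalso
            simp only [Finset.mem_insert, Finset.mem_singleton, not_or] at hp
            rcases hall p (by omega) with h|h
            · exact hp.1 h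
            · exact hp.2 h)
        rw [Finset.sum_pair hne, Finset.card_pair hne] at hsum
        have hμ2 : μ ≤ 2 := by have := hμmin (pL+1); omega
        have ht0cases : g (pM'+1) ≤ 2 ∨ g (pM'+1) = 4 := by
          rcases hland pM' hdM with hBt | hμt
          · rcases B_dichot hm8 hBt with hle4 | hge
            · rcases B_small hm8 hBt hle4 with h|h|⟨_, _, hvt⟩
              · omega
              · omega
              · right; omega
            · exfalso; omega
          · left; omega
        rcases ht0cases with h2' | h4'
        · have hD := double_cross hstep hrep hne (v := 2) (by omega) (by omega) (by omega)
            (by rw [hMM]; omega)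
          have := B3E hm8 hD.2
          omega
        · have hMc : M = c + 2 := by
            rw [hL4, hL2, hMM, h4'] at hsum
            push_cast at hsum
            omega
          apply hnp pM'
          rw [hMM, hMc, h4']
          exact pair_c24 hs1 ht4
      rcases hcls p₁ hd1 with hL1 | hM1 <;> rcases hcls p₂ hd2 with hL2 | hM2
      · obtain ⟨a1,a2,_,_⟩ := hL1
        obtain ⟨b1,b2,_,_⟩ := hL2
        have hD := double_cross hstep hrep h12 (v := 3) (by omega) (by omega) (by omega)
          (by omega)
        have := B3E hm8 hD.1
        omega
      · exact main p₁ p₂ h12 hd1 hd2 hL1 hM2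
      · exact main p₂ p₁ h12.symm hd2 hd1 hL2 hM1
      · have hx := hrep p₁ p₂ h12 (hM1.trans hM2.symm)
        rw [hM1] at hx
        exact hMnB hx


set_option maxHeartbeats 1000000 in
private lemma caseA {c m s t : ℕ} (hc : 8 ≤ c) (hm : c ≤ m)
    (hs : 1 ≤ s) (hst : s + 1 < t) (ht : t ≤ c + 1)
    {g : ZMod (c+2) → ℕ} (hlo : ∀ p, 1 ≤ g p) (hhi : ∀ p, g p ≤ m)
    (hstep : ∀ p, QArc c s t (g p) (g (p+1)))
    (hrep : ∀ p q, p ≠ q → g p = g q → QBlowup c m s t (g p))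
    {M μ : ℕ} (hMmax : ∀ p, g p ≤ M) (hμmin : ∀ p, μ ≤ g p)
    (hMex : ∃ p, g p = M) (hμex : ∃ p, g p = μ)
    {p₁ p₂ : ZMod (c+2)} (h12 : p₁ ≠ p₂)
    (hd1 : g (p₁+1) + 2 ≤ g p₁) (hd2 : g (p₂+1) + 2 ≤ g p₂)
    (hμ5 : 4 < μ) (hMlo : M + 4 ≤ m) : False := by
    have hm8 : 8 ≤ m := by omega
    have hnp : ∀ p, ¬ ModEqPair (c+1) (g p) (g (p+1)) s t := fun p => (hstep p).2
    have hdep : ∀ p, g (p+1) + 2 ≤ g p → QBlowup c m s t (g p) ∨ g p = M := by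
      intro p hdn
      rcases eq_or_lt_of_le (hMmax p) with h | h
      · exact Or.inr h
      · exact Or.inl (depart_mem hstep hrep hMex hdn h)
    have hland : ∀ p, g (p+1) + 2 ≤ g p → QBlowup c m s t (g (p+1)) ∨ g (p+1) = μ := by
      intro p hdn
      rcases eq_or_lt_of_le (hμmin (p+1)) with h | h
      · exact Or.inr h.symm
      · exact Or.inl (land_mem hstep hrep hμex hdn h)
    have hμ1 : 1 ≤ μ := by obtain ⟨p, hp⟩ := hμex; have := hlo p; omega
    have hMm : M ≤ m := by obtain ⟨p, hp⟩ := hMex; have := hhi p; omega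
    have hMge : μ + 2 ≤ M := by have := hμmin (p₁+1); have := hMmax p₁; omega
    have hA : ∀ p, g (p+1) + 2 ≤ g p → g p = M := by
      intro p hdn
      rcases hdep p hdn with hB | hM
      · exact absurd hB (B_mid_none hm8 (by have := hμmin p; omega) (by have := hMmax p; omega))
      · exact hM
    have hBM := hrep p₁ p₂ h12 ((hA p₁ hd1).trans (hA p₂ hd2).symm)
    rw [hA p₁ hd1] at hBM
    exact B_mid_none hm8 (by omega) (by omega) hBM


set_option maxHeartbeats 1000000 in
private lemma caseC {c m s t : ℕ} (hc : 8 ≤ c) (hm : c ≤ m)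
    (hs : 1 ≤ s) (hst : s + 1 < t) (ht : t ≤ c + 1)
    {g : ZMod (c+2) → ℕ} (hlo : ∀ p, 1 ≤ g p) (hhi : ∀ p, g p ≤ m)
    (hstep : ∀ p, QArc c s t (g p) (g (p+1)))
    (hrep : ∀ p q, p ≠ q → g p = g q → QBlowup c m s t (g p))
    {M μ : ℕ} (hMmax : ∀ p, g p ≤ M) (hμmin : ∀ p, μ ≤ g p)
    (hMex : ∃ p, g p = M) (hμex : ∃ p, g p = μ)
    {p₁ p₂ : ZMod (c+2)} (h12 : p₁ ≠ p₂)
    (hd1 : g (p₁+1) + 2 ≤ g p₁) (hd2 : g (p₂+1) + 2 ≤ g p₂)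
    (hμ5 : 4 < μ) (hMhi : m < M + 4) : False := by
    have hm8 : 8 ≤ m := by omega
    have hnp : ∀ p, ¬ ModEqPair (c+1) (g p) (g (p+1)) s t := fun p => (hstep p).2
    have hdep : ∀ p, g (p+1) + 2 ≤ g p → QBlowup c m s t (g p) ∨ g p = M := by
      intro p hdn
      rcases eq_or_lt_of_le (hMmax p) with h | h
      · exact Or.inr h
      · exact Or.inl (depart_mem hstep hrep hMex hdn h)
    have hland : ∀ p, g (p+1) + 2 ≤ g p → QBlowup c m s t (g (p+1)) ∨ g (p+1) = μ := by
      intro p hdn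
      rcases eq_or_lt_of_le (hμmin (p+1)) with h | h
      · exact Or.inr h.symm
      · exact Or.inl (land_mem hstep hrep hμex hdn h)
    have hμ1 : 1 ≤ μ := by obtain ⟨p, hp⟩ := hμex; have := hlo p; omega
    have hMm : M ≤ m := by obtain ⟨p, hp⟩ := hMex; have := hhi p; omega
    have hMge : μ + 2 ≤ M := by have := hμmin (p₁+1); have := hMmax p₁; omega
    -- CASE C real
    have hμ5' : 5 ≤ μ := hμ5
    have hcls : ∀ p, g (p+1) + 2 ≤ g p →
        g (p+1) = μ ∨ (g p + 1 = m ∧ g (p+1) + 3 = m ∧ ModEqPair (c+1) m (m-3) s t) := by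
      intro p hdn
      rcases hland p hdn with hB | hμt
      swap
      · exact Or.inl hμt
      rcases B_big hm8 hB (by have := hμmin (p+1); omega) with h|h|⟨h, hp2⟩|⟨h, hp3⟩
      · exfalso; have := hhi p; omega
      · exfalso; have := hhi p; omega
      · exfalso
        apply hnp p
        rw [show g p = m by have := hhi p; omega, show g (p+1) = m - 2 by omega]
        exact hp2
      · rcases (show g p = m ∨ g p + 1 = m by have := hhi p; omega) with hgm | hgm
        · exfalso
          apply hnp p
          rw [hgm, show g (p+1) = m - 3 by omega]
          exact hp3
        · exact Or.inr ⟨hgm, by omega, hp3⟩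
    have hHuniq : ∀ p q, p ≠ q →
        (g p + 1 = m ∧ g (p+1) + 3 = m ∧ ModEqPair (c+1) m (m-3) s t) →
        (g q + 1 = m ∧ g (q+1) + 3 = m) → False := by
      intro p q hne he hf
      obtain ⟨e1, e2, hp3⟩ := he
      obtain ⟨f1, f2⟩ := hf
      have hD := double_cross hstep hrep hne (v := m - 2) (by omega) (by omega) (by omega)
        (by omega)
      rcases B_big hm8 hD.1 (by omega) with h|h|⟨h, hp2⟩|⟨h, _⟩
      · omega
      · omega
      · exact pair_not_both hc hm8 hs hst ht hp2 hp3
      · omega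
    have hUuniq : ∀ p q, g (p+1) + 2 ≤ g p → g (q+1) + 2 ≤ g q → p ≠ q →
        g (p+1) = μ → g (q+1) = μ → False := by
      intro p q hdp hdq hne hp hq
      have hne1 : p + 1 ≠ q + 1 := fun h => hne (add_right_cancel h)
      have hBμ := hrep (p+1) (q+1) hne1 (by rw [hp, hq])
      rw [hp] at hBμ
      rcases B_big hm8 hBμ (by omega) with h|h|⟨h, hp2⟩|⟨h, hp3⟩
      · have := hhi p; omega
      · have := hhi p; omega
      · apply hnp p
        rw [show g p = m by have := hhi p; omega, hp, show μ = m - 2 by omega]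
        exact hp2
      · have hgp : g p = m ∨ g p + 1 = m := by have := hhi p; omega
        have hgq : g q = m ∨ g q + 1 = m := by have := hhi q; omega
        rcases hgp with h1 | h1
        · apply hnp p; rw [h1, hp, show μ = m - 3 by omega]; exact hp3
        rcases hgq with h2 | h2
        · apply hnp q; rw [h2, hq, show μ = m - 3 by omega]; exact hp3
        · exact hHuniq p q hne ⟨h1, by omega, hp3⟩ ⟨h2, by omega⟩
    have mainC : ∀ pH q : ZMod (c+2), pH ≠ q →
        g (pH+1) + 2 ≤ g pH → g (q+1) + 2 ≤ g q →
        (g pH + 1 = m ∧ g (pH+1) + 3 = m ∧ ModEqPair (c+1) m (m-3) s t) →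
        g (q+1) = μ → False := by
      intro pH q hne hdH hdq hH hU
      obtain ⟨e1, e2, hp3⟩ := hH
      have hall : ∀ p, g (p+1) + 2 ≤ g p → p = pH ∨ p = q := by
        intro p hdn
        rcases hcls p hdn with hUp | hHp
        · right
          by_contra hnep
          exact hUuniq p q hdn hdq hnep hUp hU
        · left
          by_contra hnep
          exact hHuniq p pH hnep hHp ⟨e1, e2⟩
      have hsum := sum_walk g {pH, q} (fun p hp => by
        rcases (hstep p).1 with h1 | h1
        · exact h1
        · exfalso
          simp only [Finset.mem_insert, Finset.mem_singleton, not_or] at hp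
          rcases hall p (by omega) with h|h
          · exact hp.1 h
          · exact hp.2 h)
      rw [Finset.sum_pair hne, Finset.card_pair hne] at hsum
      -- analyze the origin of the jump landing at μ
      have hbig : g q + 1 = m ∨ g q = m → False := by
        intro hf
        have hD := double_cross hstep hrep hne (v := m - 2) (by omega) (by omega)
          (by omega) (by omega)
        rcases B_big hm8 hD.1 (by omega) with h|h|⟨h, hp2⟩|⟨h, _⟩
        · omega
        · omega
        · exact pair_not_both hc hm8 hs hst ht hp2 hp3
        · omega
      rcases hdep q hdq with hBf | hfM
      · rcases B_big hm8 hBf (by have := hμmin (q+1); omega) with h|h|⟨h, hp2⟩|⟨h, _⟩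
        · exact hbig (Or.inl h)
        · exact hbig (Or.inr h)
        · exact pair_not_both hc hm8 hs hst ht hp2 hp3
        · -- g q = m - 3 : use the sum to get μ + c + 1 = m
          have hμm : μ + (c + 1) = m := by
            rw [show g pH = m - 1 by omega, show g (pH + 1) = m - 3 by omega, hU,
              show g q = m - 3 by omega] at hsum
            push_cast at hsum
            omega
          have hmod : Nat.ModEq (c+1) μ m := (Nat.modEq_iff_dvd' (by omega)).mpr ⟨1, by omega⟩
          apply hnp q
          rw [show g q = m - 3 by omega, hU]
          exact pair_mm3_to hm8 hp3 hmod
      · -- g q = M ≥ m - 1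
        have hMm1 : m ≤ M + 1 := by have := hMmax pH; omega
        exact hbig (by omega)
    rcases hcls p₁ hd1 with hU1 | hH1 <;> rcases hcls p₂ hd2 with hU2 | hH2
    · exact hUuniq p₁ p₂ hd1 hd2 h12 hU1 hU2
    · exact mainC p₂ p₁ h12.symm hd2 hd1 hH2 hU1
    · exact mainC p₁ p₂ h12 hd1 hd2 hH1 hU2
    · exact hHuniq p₁ p₂ h12 hH1 ⟨hH2.1, hH2.2.1⟩


set_option maxHeartbeats 2000000 in
private lemma caseD {c m s t : ℕ} (hc : 8 ≤ c) (hm : c ≤ m)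
    (hs : 1 ≤ s) (hst : s + 1 < t) (ht : t ≤ c + 1)
    {g : ZMod (c+2) → ℕ} (hlo : ∀ p, 1 ≤ g p) (hhi : ∀ p, g p ≤ m)
    (hstep : ∀ p, QArc c s t (g p) (g (p+1)))
    (hrep : ∀ p q, p ≠ q → g p = g q → QBlowup c m s t (g p))
    {M μ : ℕ} (hMmax : ∀ p, g p ≤ M) (hμmin : ∀ p, μ ≤ g p)
    (hMex : ∃ p, g p = M) (hμex : ∃ p, g p = μ)
    {p₁ p₂ : ZMod (c+2)} (h12 : p₁ ≠ p₂)
    (hd1 : g (p₁+1) + 2 ≤ g p₁) (hd2 : g (p₂+1) + 2 ≤ g p₂)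
    (hμ4 : μ ≤ 4) (hMhi : m < M + 4) : False := by
    have hm8 : 8 ≤ m := by omega
    have hnp : ∀ p, ¬ ModEqPair (c+1) (g p) (g (p+1)) s t := fun p => (hstep p).2
    have hdep : ∀ p, g (p+1) + 2 ≤ g p → QBlowup c m s t (g p) ∨ g p = M := by
      intro p hdn
      rcases eq_or_lt_of_le (hMmax p) with h | h
      · exact Or.inr h
      · exact Or.inl (depart_mem hstep hrep hMex hdn h)
    have hland : ∀ p, g (p+1) + 2 ≤ g p → QBlowup c m s t (g (p+1)) ∨ g (p+1) = μ := by
      intro p hdn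
      rcases eq_or_lt_of_le (hμmin (p+1)) with h | h
      · exact Or.inr h.symm
      · exact Or.inl (land_mem hstep hrep hμex hdn h)
    have hμ1 : 1 ≤ μ := by obtain ⟨p, hp⟩ := hμex; have := hlo p; omega
    have hMm : M ≤ m := by obtain ⟨p, hp⟩ := hMex; have := hhi p; omega
    have hMge : μ + 2 ≤ M := by have := hμmin (p₁+1); have := hMmax p₁; omega
    -- CASE D real : μ ≤ 4 and m ≤ M + 3
    have hcls : ∀ p, g (p+1) + 2 ≤ g p →
        (g p = 4 ∧ g (p+1) = 2 ∧ s = 1 ∧ t = 4) ∨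
        (g p + 1 = m ∧ g (p+1) + 3 = m ∧ ModEqPair (c+1) m (m-3) s t) ∨
        (m ≤ g p + 3 ∧ g (p+1) ≤ 4) := by
      intro p hdn
      have hp1 : g p ≤ 4 ∨ m ≤ g p + 3 := by
        rcases hdep p hdn with hB | hM
        · exact B_dichot hm8 hB
        · right; omega
      have hp2 : g (p+1) ≤ 4 ∨ m ≤ g (p+1) + 3 := by
        rcases hland p hdn with hB | hμt
        · exact B_dichot hm8 hB
        · left; omega
      rcases hp1 with h1 | h1
      · left
        have hBp : QBlowup c m s t (g p) := by
          rcases hdep p hdn with hB | hM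
          · exact hB
          · exfalso; omega
        have h3 : 3 ≤ g p := by have := hlo (p+1); omega
        rcases B_small hm8 hBp h1 with h|h|⟨hs1, ht34, hvt⟩
        · omega
        · omega
        rcases ht34 with ht3 | ht4
        · exfalso
          apply hnp p
          rw [show g p = 3 by omega, show g (p+1) = 1 by have := hlo (p+1); omega]
          exact pair_31 hs1 ht3
        · refine ⟨by omega, ?_, hs1, ht4⟩
          rcases (show g (p+1) = 1 ∨ g (p+1) = 2 by have := hlo (p+1); omega) with hx | hx
          · exfalso
            apply hnp p
            rw [show g p = 4 by omega, hx]
            exact pair_41 hs1 ht4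
          · exact hx
      · rcases hp2 with h2 | h2
        · right; right; exact ⟨h1, h2⟩
        · right; left
          have hBl : QBlowup c m s t (g (p+1)) := by
            rcases hland p hdn with hB | hμt
            · exact hB
            · exfalso; omega
          rcases B_big hm8 hBl (by omega) with h|h|⟨h, hpp2⟩|⟨h, hpp3⟩
          · exfalso; have := hhi p; omega
          · exfalso; have := hhi p; omega
          · exfalso
            apply hnp p
            rw [show g p = m by have := hhi p; omega, show g (p+1) = m - 2 by omega]
            exact hpp2
          · rcases (show g p = m ∨ g p + 1 = m by have := hhi p; omega) with hgm | hgm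
            · exfalso
              apply hnp p
              rw [hgm, show g (p+1) = m - 3 by omega]
              exact hpp3
            · exact ⟨hgm, by omega, hpp3⟩
    have hLOuniq : ∀ p q, p ≠ q →
        (g p = 4 ∧ g (p+1) = 2 ∧ s = 1 ∧ t = 4) →
        (g q = 4 ∧ g (q+1) = 2) → False := by
      intro p q hne hp hq
      have hD := double_cross hstep hrep hne (v := 3) (by omega) (by omega) (by omega) (by omega)
      have := B3E hm8 hD.1
      omega
    have hHIuniq : ∀ p q, p ≠ q →
        (g p + 1 = m ∧ g (p+1) + 3 = m ∧ ModEqPair (c+1) m (m-3) s t) →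
        (g q + 1 = m ∧ g (q+1) + 3 = m) → False := by
      intro p q hne hp hq
      obtain ⟨e1, e2, hp3⟩ := hp
      have hD := double_cross hstep hrep hne (v := m - 2) (by omega) (by omega) (by omega)
        (by omega)
      rcases B_big hm8 hD.1 (by omega) with h|h|⟨h, hp2⟩|⟨h, _⟩
      · omega
      · omega
      · exact pair_not_both hc hm8 hs hst ht hp2 hp3
      · omega
    by_cases hbes : m = 8 ∧ (QBlowup c m s t 4 ∨ QBlowup c m s t 5)
    · -- bespoke m = 8 analysis
      obtain ⟨hm8', hB45⟩ := hbes
      by_cases hB4 : QBlowup c m s t 4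
      · obtain ⟨hs1, ht4⟩ := B4E hm8 hB4
        have hnop3 : ¬ ModEqPair (c+1) m (m-3) s t := by
          intro h
          exact modeq_bounds (pair_m4 hc hm8 hs1 ht4 h).symm (by omega) (by omega)
        have hnoB5 : ¬ QBlowup c m s t 5 := by
          intro h
          rcases B_big hm8 h (by omega) with h'|h'|⟨h', _⟩|⟨h', hp3⟩
          · omega
          · omega
          · omega
          · exact hnop3 hp3
        have hnoB3 : ¬ QBlowup c m s t 3 := fun h => by have := B3E hm8 h; omega
        have hMIDuniq : ∀ p q, p ≠ q → (m ≤ g p + 3 ∧ g (p+1) ≤ 4) →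
            (m ≤ g q + 3 ∧ g (q+1) ≤ 4) → False := by
          intro p q hne hp hq
          have hD := double_cross hstep hrep hne (v := 4) (by omega) (by omega) (by omega)
            (by omega)
          exact hnoB5 hD.2
        have mainLM : ∀ pL pMd : ZMod (c+2), pL ≠ pMd →
            g (pL+1) + 2 ≤ g pL → g (pMd+1) + 2 ≤ g pMd →
            (g pL = 4 ∧ g (pL+1) = 2 ∧ s = 1 ∧ t = 4) →
            (m ≤ g pMd + 3 ∧ g (pMd+1) ≤ 4) → False := by
          intro pL pMd hne hdL hdMd hLO hMID
          have hall : ∀ p, g (p+1) + 2 ≤ g p → p = pL ∨ p = pMd := by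
            intro p hdn
            rcases hcls p hdn with hLp | hHp | hMp
            · left
              by_contra hnep
              exact hLOuniq p pL hnep hLp ⟨hLO.1, hLO.2.1⟩
            · exact (hnop3 hHp.2.2).elim
            · right
              by_contra hnep
              exact hMIDuniq p pMd hnep hMp hMID
          have hsum := sum_walk g {pL, pMd} (fun p hp => by
            rcases (hstep p).1 with h1 | h1
            · exact h1
            · exfalso
              simp only [Finset.mem_insert, Finset.mem_singleton, not_or] at hp
              rcases hall p (by omega) with h|h
              · exact hp.1 h
              · exact hp.2 h)
          rw [Finset.sum_pair hne, Finset.card_pair hne] at hsum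
          have hf : g pMd = g (pMd+1) + 6 := by
            rw [hLO.1, hLO.2.1] at hsum
            push_cast at hsum
            omega
          have hD := double_cross hstep hrep hne (v := 2) (by omega) (by omega)
            (by have := hhi pMd; omega) (by omega)
          exact hnoB3 hD.2
        rcases hcls p₁ hd1 with hL1 | hH1 | hM1
        · rcases hcls p₂ hd2 with hL2 | hH2 | hM2
          · exact hLOuniq p₁ p₂ h12 hL1 ⟨hL2.1, hL2.2.1⟩
          · exact (hnop3 hH2.2.2).elim
          · exact mainLM p₁ p₂ h12 hd1 hd2 hL1 hM2
        · exact (hnop3 hH1.2.2).elim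
        · rcases hcls p₂ hd2 with hL2 | hH2 | hM2
          · exact mainLM p₂ p₁ h12.symm hd2 hd1 hL2 hM1
          · exact (hnop3 hH2.2.2).elim
          · exact hMIDuniq p₁ p₂ h12 hM1 hM2
      · -- 5 is a blowup index : s = 5, t = 8 (with c = 8, m = 8)
        have hB5 : QBlowup c m s t 5 := hB45.resolve_left hB4
        have hp3' : ModEqPair (c+1) m (m-3) s t := by
          rcases B_big hm8 hB5 (by omega) with h|h|⟨h, _⟩|⟨h, hp3⟩
          · omega
          · omega
          · omega
          · exact hp3
        have hc8 : c = 8 := by omega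
        have hs5 : s = 5 ∧ t = 8 := by
          have hm38 : m - 3 = 5 := by omega
          rcases hp3' with ⟨h1, h2⟩ | ⟨h1, h2⟩
          · exfalso
            exact modeq_bounds h1.symm (by omega) (by omega)
          · rw [hm38] at h2
            constructor
            · rcases lt_trichotomy s 5 with h | h | h
              · exact absurd (h2.symm) (fun hh => modeq_bounds hh (by omega) (by omega))
              · exact h
              · exact absurd h2 (fun hh => modeq_bounds hh (by omega) (by omega))
            · rcases lt_trichotomy t 8 with h | h | h
              · exact absurd h1 (fun hh => modeq_bounds hh.symm (by omega) (by omega))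
              · exact h
              · exact absurd h1 (fun hh => modeq_bounds hh (by omega) (by omega))
        obtain ⟨hs5', ht8⟩ := hs5
        have hnoB3 : ¬ QBlowup c m s t 3 := fun h => by have := B3E hm8 h; omega
        have hnoB6 : ¬ QBlowup c m s t 6 := by
          intro h
          rcases B_big hm8 h (by omega) with h'|h'|⟨h', hp2⟩|⟨h', _⟩
          · omega
          · omega
          · rcases hp2 with ⟨a1, a2⟩ | ⟨a1, a2⟩
            · exact modeq_bounds a1.symm (by omega) (by omega)
            · exact modeq_bounds a2.symm (by omega) (by omega)
          · omega
        have hMIDuniq : ∀ p q, p ≠ q → (m ≤ g p + 3 ∧ g (p+1) ≤ 4) →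
            (m ≤ g q + 3 ∧ g (q+1) ≤ 4) → False := by
          intro p q hne hp hq
          have hD := double_cross hstep hrep hne (v := 4) (by omega) (by omega) (by omega)
            (by omega)
          exact hB4 hD.1
        have mainHM : ∀ pH pMd : ZMod (c+2), pH ≠ pMd →
            g (pH+1) + 2 ≤ g pH → g (pMd+1) + 2 ≤ g pMd →
            (g pH + 1 = m ∧ g (pH+1) + 3 = m ∧ ModEqPair (c+1) m (m-3) s t) →
            (m ≤ g pMd + 3 ∧ g (pMd+1) ≤ 4) → False := by
          intro pH pMd hne hdH hdMd hHI hMID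
          have hall : ∀ p, g (p+1) + 2 ≤ g p → p = pH ∨ p = pMd := by
            intro p hdn
            rcases hcls p hdn with hLp | hHp | hMp
            · exfalso; omega
            · left
              by_contra hnep
              exact hHIuniq p pH hnep hHp ⟨hHI.1, hHI.2.1⟩
            · right
              by_contra hnep
              exact hMIDuniq p pMd hnep hMp hMID
          have hsum := sum_walk g {pH, pMd} (fun p hp => by
            rcases (hstep p).1 with h1 | h1
            · exact h1
            · exfalso
              simp only [Finset.mem_insert, Finset.mem_singleton, not_or] at hp
              rcases hall p (by omega) with h|h
              · exact hp.1 h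
              · exact hp.2 h)
          rw [Finset.sum_pair hne, Finset.card_pair hne] at hsum
          have hf : g pMd = g (pMd+1) + 6 := by
            rw [show g pH = 7 by omega, show g (pH+1) = 5 by omega] at hsum
            push_cast at hsum
            omega
          have hD := double_cross hstep hrep hne (v := 6) (by omega) (by omega) (by omega)
            (by have := hlo (pMd+1); omega)
          exact hnoB6 hD.1
        rcases hcls p₁ hd1 with hL1 | hH1 | hM1
        · exfalso; omega
        · rcases hcls p₂ hd2 with hL2 | hH2 | hM2
          · exfalso; omega
          · exact hHIuniq p₁ p₂ h12 hH1 ⟨hH2.1, hH2.2.1⟩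
          · exact mainHM p₁ p₂ h12 hd1 hd2 hH1 hM2
        · rcases hcls p₂ hd2 with hL2 | hH2 | hM2
          · exfalso; omega
          · exact mainHM p₂ p₁ h12.symm hd2 hd1 hH2 hM1
          · exact hMIDuniq p₁ p₂ h12 hM1 hM2
    · -- main line of case D : there is a fully non-blowup gap (v, v+1)
      have hv : ∃ v, 4 ≤ v ∧ v + 4 ≤ m ∧ ¬ QBlowup c m s t v ∧ ¬ QBlowup c m s t (v+1) := by
        by_cases hB4 : QBlowup c m s t 4
        · have hm9 : 9 ≤ m := by
            rcases Nat.lt_or_ge m 9 with h | h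
            · exact absurd (Or.inl hB4) (by
                intro hx
                exact hbes ⟨by omega, hx⟩)
            · exact h
          obtain ⟨hs1, ht4⟩ := B4E hm8 hB4
          refine ⟨5, by omega, by omega, ?_, ?_⟩
          · intro h
            rcases B_big hm8 h (by omega) with h'|h'|⟨h', _⟩|⟨h', _⟩ <;> omega
          · intro h
            rcases B_big hm8 h (by omega) with h'|h'|⟨h', _⟩|⟨h', hp3⟩
            · omega
            · omega
            · omega
            · exact modeq_bounds (pair_m4 hc hm8 hs1 ht4 hp3).symm (by omega) (by omega)
        · refine ⟨4, le_refl 4, by omega, hB4, ?_⟩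
          intro h
          rcases B_big hm8 h (by omega) with h'|h'|⟨h', _⟩|⟨h', hp3⟩
          · omega
          · omega
          · omega
          · refine hbes ⟨by omega, Or.inr ?_⟩
            right; right; right; right; right; right
            exact ⟨by omega, hp3⟩
      obtain ⟨v, hv4, hvm, hnv, hnv1⟩ := hv
      have hMIDuniq : ∀ p q, p ≠ q → (m ≤ g p + 3 ∧ g (p+1) ≤ 4) →
          (m ≤ g q + 3 ∧ g (q+1) ≤ 4) → False := by
        intro p q hne hp hq
        have hD := double_cross hstep hrep hne (v := v) (by omega) (by omega) (by omega)
          (by omega)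
        exact hnv hD.1
      have mainLM : ∀ pL pMd : ZMod (c+2), pL ≠ pMd →
          g (pL+1) + 2 ≤ g pL → g (pMd+1) + 2 ≤ g pMd →
          (g pL = 4 ∧ g (pL+1) = 2 ∧ s = 1 ∧ t = 4) →
          (m ≤ g pMd + 3 ∧ g (pMd+1) ≤ 4) →
          (¬ ∃ p, (g (p+1) + 2 ≤ g p) ∧ g p + 1 = m ∧ g (p+1) + 3 = m ∧
            ModEqPair (c+1) m (m-3) s t) → False := by
        intro pL pMd hne hdL hdMd hLO hMID hnHI
        obtain ⟨hL4, hL2, hs1, ht4⟩ := hLO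
        have hall : ∀ p, g (p+1) + 2 ≤ g p → p = pL ∨ p = pMd := by
          intro p hdn
          rcases hcls p hdn with hLp | hHp | hMp
          · left
            by_contra hnep
            exact hLOuniq p pL hnep hLp ⟨hL4, hL2⟩
          · exact (hnHI ⟨p, hdn, hHp⟩).elim
          · right
            by_contra hnep
            exact hMIDuniq p pMd hnep hMp hMID
        have hsum := sum_walk g {pL, pMd} (fun p hp => by
          rcases (hstep p).1 with h1 | h1
          · exact h1
          · exfalso
            simp only [Finset.mem_insert, Finset.mem_singleton, not_or] at hp
            rcases hall p (by omega) with h|h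
            · exact hp.1 h
            · exact hp.2 h)
        rw [Finset.sum_pair hne, Finset.card_pair hne] at hsum
        have hμ2 : μ ≤ 2 := by have := hμmin (pL+1); omega
        have ht0cases : g (pMd+1) ≤ 2 ∨ g (pMd+1) = 4 := by
          rcases hland pMd hdMd with hBt | hμt
          · rcases B_small hm8 hBt hMID.2 with h|h|⟨_, _, hvt⟩
            · omega
            · omega
            · right; omega
          · left; omega
        rcases ht0cases with h2' | h4'
        · have hD := double_cross hstep hrep hne (v := 2) (by omega) (by omega) (by omega)
            (by omega)
          have := B3E hm8 hD.2
          omega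
        · have hfc : g pMd = c + 2 := by
            rw [hL4, hL2, h4'] at hsum
            push_cast at hsum
            omega
          apply hnp pMd
          rw [hfc, h4']
          exact pair_c24 hs1 ht4
      have mainHM : ∀ pH pMd : ZMod (c+2), pH ≠ pMd →
          g (pH+1) + 2 ≤ g pH → g (pMd+1) + 2 ≤ g pMd →
          (g pH + 1 = m ∧ g (pH+1) + 3 = m ∧ ModEqPair (c+1) m (m-3) s t) →
          (m ≤ g pMd + 3 ∧ g (pMd+1) ≤ 4) →
          (¬ ∃ p, (g (p+1) + 2 ≤ g p) ∧ g p = 4 ∧ g (p+1) = 2 ∧ s = 1 ∧ t = 4) → False := by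
        intro pH pMd hne hdH hdMd hHI hMID hnLO
        obtain ⟨e1, e2, hp3⟩ := hHI
        have hall : ∀ p, g (p+1) + 2 ≤ g p → p = pH ∨ p = pMd := by
          intro p hdn
          rcases hcls p hdn with hLp | hHp | hMp
          · exact (hnLO ⟨p, hdn, hLp⟩).elim
          · left
            by_contra hnep
            exact hHIuniq p pH hnep hHp ⟨e1, e2⟩
          · right
            by_contra hnep
            exact hMIDuniq p pMd hnep hMp hMID
        have hsum := sum_walk g {pH, pMd} (fun p hp => by
          rcases (hstep p).1 with h1 | h1
          · exact h1
          · exfalso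
            simp only [Finset.mem_insert, Finset.mem_singleton, not_or] at hp
            rcases hall p (by omega) with h|h
            · exact hp.1 h
            · exact hp.2 h)
        rw [Finset.sum_pair hne, Finset.card_pair hne] at hsum
        have hbigf : m ≤ g pMd + 1 → False := by
          intro hbf
          have hD := double_cross hstep hrep hne (v := m - 2) (by omega) (by omega)
            (by omega) (by omega)
          rcases B_big hm8 hD.1 (by omega) with h|h|⟨h, hp2⟩|⟨h, _⟩
          · omega
          · omega
          · exact pair_not_both hc hm8 hs hst ht hp2 hp3
          · omega
        rcases hdep pMd hdMd with hBf | hfM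
        · rcases B_big hm8 hBf (by omega) with h|h|⟨h, hp2⟩|⟨h, _⟩
          · exact hbigf (by omega)
          · exact hbigf (by omega)
          · exact pair_not_both hc hm8 hs hst ht hp2 hp3
          · -- g pMd = m - 3
            have hμm : g (pMd+1) + (c + 1) = m := by
              rw [show g pH = m - 1 by omega, show g (pH+1) = m - 3 by omega] at hsum
              push_cast at hsum
              omega
            have hmod : Nat.ModEq (c+1) (g (pMd+1)) m :=
              (Nat.modEq_iff_dvd' (by omega)).mpr ⟨1, by omega⟩
            apply hnp pMd
            rw [show g pMd = m - 3 by omega]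
            exact pair_mm3_to hm8 hp3 hmod
        · have hMm1 : m ≤ M + 1 := by have := hMmax pH; omega
          exact hbigf (by omega)
      -- dispatch over which of the three types occur among the down steps
      by_cases hLOex : ∃ p, (g (p+1) + 2 ≤ g p) ∧ g p = 4 ∧ g (p+1) = 2 ∧ s = 1 ∧ t = 4
      · by_cases hHIex : ∃ p, (g (p+1) + 2 ≤ g p) ∧ g p + 1 = m ∧ g (p+1) + 3 = m ∧
            ModEqPair (c+1) m (m-3) s t
        · by_cases hMIDex : ∃ p, (g (p+1) + 2 ≤ g p) ∧ m ≤ g p + 3 ∧ g (p+1) ≤ 4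
          · -- all three types present
            obtain ⟨pL, hdL, hL4, hL2, hs1, ht4⟩ := hLOex
            obtain ⟨pH, hdH, e1, e2, hp3⟩ := hHIex
            obtain ⟨pMd, hdMd, hf3, ht4'⟩ := hMIDex
            have ne1 : pL ≠ pH := by
              intro h
              rw [h] at hL2
              omega
            have ne2 : pL ≠ pMd := by
              intro h
              rw [h] at hL4
              omega
            have ne3 : pH ≠ pMd := by
              intro h
              rw [h] at e2
              omega
            have hall : ∀ p, g (p+1) + 2 ≤ g p → p = pL ∨ p = pH ∨ p = pMd := by
              intro p hdn
              rcases hcls p hdn with hLp | hHp | hMp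
              · left
                by_contra hnep
                exact hLOuniq p pL hnep hLp ⟨hL4, hL2⟩
              · right; left
                by_contra hnep
                exact hHIuniq p pH hnep hHp ⟨e1, e2⟩
              · right; right
                by_contra hnep
                exact hMIDuniq p pMd hnep hMp ⟨hf3, ht4'⟩
            have hsum := sum_walk g {pL, pH, pMd} (fun p hp => by
              rcases (hstep p).1 with h1 | h1
              · exact h1
              · exfalso
                simp only [Finset.mem_insert, Finset.mem_singleton, not_or] at hp
                rcases hall p (by omega) with h|h|h
                · exact hp.1 h
                · exact hp.2.1 h
                · exact hp.2.2 h)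
            have hmem : pL ∉ ({pH, pMd} : Finset (ZMod (c+2))) := by
              simp only [Finset.mem_insert, Finset.mem_singleton]
              push_neg
              exact ⟨ne1, ne2⟩
            rw [Finset.sum_insert hmem, Finset.sum_pair ne3,
              Finset.card_insert_of_notMem hmem, Finset.card_pair ne3] at hsum
            -- 2 + 2 + (f - t0) = c - 1  with f ≥ m-3, t0 ≤ 4 : gives m ≤ c + 2
            have hmc2 : m ≤ c + 2 := by
              rw [hL4, hL2, show g pH = m - 1 by omega, show g (pH+1) = m - 3 by omega] at hsum
              have hfm : g pMd ≤ m := hhi pMd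
              push_cast at hsum
              omega
            exact modeq_bounds (pair_m4 hc hm8 hs1 ht4 hp3).symm (by omega) (by omega)
          · -- LO and HI only
            obtain ⟨pL, hdL, hL4, hL2, hs1, ht4⟩ := hLOex
            obtain ⟨pH, hdH, e1, e2, hp3⟩ := hHIex
            have ne1 : pL ≠ pH := by
              intro h
              rw [h] at hL2
              omega
            have hall : ∀ p, g (p+1) + 2 ≤ g p → p = pL ∨ p = pH := by
              intro p hdn
              rcases hcls p hdn with hLp | hHp | hMp
              · left
                by_contra hnep
                exact hLOuniq p pL hnep hLp ⟨hL4, hL2⟩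
              · right
                by_contra hnep
                exact hHIuniq p pH hnep hHp ⟨e1, e2⟩
              · exact (hMIDex ⟨p, hdn, hMp⟩).elim
            have hsum := sum_walk g {pL, pH} (fun p hp => by
              rcases (hstep p).1 with h1 | h1
              · exact h1
              · exfalso
                simp only [Finset.mem_insert, Finset.mem_singleton, not_or] at hp
                rcases hall p (by omega) with h|h
                · exact hp.1 h
                · exact hp.2 h)
            rw [Finset.sum_pair ne1, Finset.card_pair ne1] at hsum
            rw [hL4, hL2, show g pH = m - 1 by omega, show g (pH+1) = m - 3 by omega] at hsum
            push_cast at hsum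
            omega
        · -- no HI present
          obtain ⟨pL, hdL, hLOfull⟩ := hLOex
          rcases hcls p₁ hd1 with hL1 | hH1 | hM1
          · rcases hcls p₂ hd2 with hL2 | hH2 | hM2
            · exact hLOuniq p₁ p₂ h12 hL1 ⟨hL2.1, hL2.2.1⟩
            · exact (hHIex ⟨p₂, hd2, hH2⟩).elim
            · exact mainLM p₁ p₂ h12 hd1 hd2 hL1 hM2 hHIex
          · exact (hHIex ⟨p₁, hd1, hH1⟩).elim
          · rcases hcls p₂ hd2 with hL2 | hH2 | hM2
            · exact mainLM p₂ p₁ h12.symm hd2 hd1 hL2 hM1 hHIex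
            · exact (hHIex ⟨p₂, hd2, hH2⟩).elim
            · exact hMIDuniq p₁ p₂ h12 hM1 hM2
      · -- no LO present
        rcases hcls p₁ hd1 with hL1 | hH1 | hM1
        · exact (hLOex ⟨p₁, hd1, hL1⟩).elim
        · rcases hcls p₂ hd2 with hL2 | hH2 | hM2
          · exact (hLOex ⟨p₂, hd2, hL2⟩).elim
          · exact hHIuniq p₁ p₂ h12 hH1 ⟨hH2.1, hH2.2.1⟩
          · exact mainHM p₁ p₂ h12 hd1 hd2 hH1 hM2 hLOex
        · rcases hcls p₂ hd2 with hL2 | hH2 | hM2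
          · exact (hLOex ⟨p₂, hd2, hL2⟩).elim
          · exact mainHM p₂ p₁ h12.symm hd2 hd1 hH2 hM1 hLOex
          · exact hMIDuniq p₁ p₂ h12 hM1 hM2
  -- CASE C : 4 < μ and m ≤ M + 3


set_option maxHeartbeats 1000000 in
private lemma no_walk {c m s t : ℕ} (hc : 8 ≤ c) (hm : c ≤ m)
    (hs : 1 ≤ s) (hst : s + 1 < t) (ht : t ≤ c + 1)
    {g : ZMod (c+2) → ℕ} (hlo : ∀ p, 1 ≤ g p) (hhi : ∀ p, g p ≤ m)
    (hstep : ∀ p, QArc c s t (g p) (g (p+1)))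
    (hrep : ∀ p q, p ≠ q → g p = g q → QBlowup c m s t (g p)) : False := by
    haveI : NeZero (c+2) := ⟨by omega⟩
    have hSne : (Finset.univ.image g).Nonempty :=
      ⟨g 0, Finset.mem_image_of_mem g (Finset.mem_univ 0)⟩
    obtain ⟨M, hMmax, hMex⟩ : ∃ M, (∀ p, g p ≤ M) ∧ ∃ p, g p = M := by
      refine ⟨(Finset.univ.image g).max' hSne,
        fun p => Finset.le_max' _ _ (Finset.mem_image_of_mem g (Finset.mem_univ p)), ?_⟩
      have h := Finset.max'_mem _ hSne
      rw [Finset.mem_image] at h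
      obtain ⟨p, _, hp⟩ := h
      exact ⟨p, hp⟩
    obtain ⟨μ, hμmin, hμex⟩ : ∃ μ, (∀ p, μ ≤ g p) ∧ ∃ p, g p = μ := by
      refine ⟨(Finset.univ.image g).min' hSne,
        fun p => Finset.min'_le _ _ (Finset.mem_image_of_mem g (Finset.mem_univ p)), ?_⟩
      have h := Finset.min'_mem _ hSne
      rw [Finset.mem_image] at h
      obtain ⟨p, _, hp⟩ := h
      exact ⟨p, hp⟩
    obtain ⟨p₁, p₂, h12, hd1, hd2⟩ := two_dn hc hstep
    rcases le_or_gt (M+4) m with hMlo | hMhi <;> rcases le_or_gt μ 4 with hμ4 | hμ5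
    · exact caseB hc hm hs hst ht hlo hhi hstep hrep hMmax hμmin hMex hμex h12 hd1 hd2 hμ4 hMlo
    · exact caseA hc hm hs hst ht hlo hhi hstep hrep hMmax hμmin hMex hμex h12 hd1 hd2 hμ5 hMlo
    · exact caseD hc hm hs hst ht hlo hhi hstep hrep hMmax hμmin hMex hμex h12 hd1 hd2 hμ4 hMhi
    · exact caseC hc hm hs hst ht hlo hhi hstep hrep hMmax hμmin hMex hμex h12 hd1 hd2 hμ5 hMhi


/-- For `c ≥ 8` and `m ≥ c`, every member of the family
`𝒬_m = 𝒬¹_m ∪ 𝒬²_m` has no `(c+2)`-cycle. -/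
theorem stmt_2 {V : Type*} (c m : ℕ) (hc : 8 ≤ c) (hm : c ≤ m) (D : Digraph V)
    (hQ : IsInQ D c m) : ¬ HasCycle D (c + 2) := by
  intro hcyc
  obtain ⟨f, hfinj, hfadj⟩ := hcyc
  haveI : NeZero (c+2) := ⟨by omega⟩
  have hm8 : 8 ≤ m := by omega
  rcases hQ with hQ1 | hQ2
  · obtain ⟨s, t, hs, hst, ht, A, hcov, hdisj, hne, hsub, harc⟩ := hQ1
    choose idx hidx1 hidx2 hidxmem using hcov
    refine no_walk hc hm hs hst ht (g := fun p => idx (f p))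
      (fun p => hidx1 (f p)) (fun p => hidx2 (f p)) ?_ ?_
    · intro p
      exact (harc _ _ (hidx1 (f p)) (hidx2 (f p)) (hidx1 (f (p+1))) (hidx2 (f (p+1)))
        (f p) (hidxmem (f p)) (f (p+1)) (hidxmem (f (p+1)))).mp (hfadj p)
    · intro p q hpq heq
      by_contra hnB
      have hss := hsub _ (hidx1 (f p)) (hidx2 (f p)) hnB
      have h1 : f p ∈ A (idx (f p)) := hidxmem (f p)
      have h2 : f q ∈ A (idx (f p)) := by rw [heq]; exact hidxmem (f q)
      exact hpq (hfinj (hss h1 h2))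
  · obtain ⟨s, t, a, b, hs, hst, ht, hrev, A, hcov, hdisj, hne, hsub, harc⟩ := hQ2
    choose idx hidx1 hidx2 hidxmem using hcov
    have hglo : ∀ p : ZMod (c+2), 1 ≤ idx (f p) := fun p => hidx1 (f p)
    have hghi : ∀ p : ZMod (c+2), idx (f p) ≤ m := fun p => hidx2 (f p)
    have hgstep' : ∀ p : ZMod (c+2), QArcRev c s t a b (idx (f p)) (idx (f (p+1))) := by
      intro p
      exact (harc _ _ (hidx1 (f p)) (hidx2 (f p)) (hidx1 (f (p+1))) (hidx2 (f (p+1)))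
        (f p) (hidxmem (f p)) (f (p+1)) (hidxmem (f (p+1)))).mp (hfadj p)
    have hgrep : ∀ p q : ZMod (c+2), p ≠ q → idx (f p) = idx (f q) →
        QBlowup c m s t (idx (f p)) := by
      intro p q hpq heq
      by_contra hnB
      have hss := hsub _ (hidx1 (f p)) (hidx2 (f p)) hnB
      have h1 : f p ∈ A (idx (f p)) := hidxmem (f p)
      have h2 : f q ∈ A (idx (f p)) := by rw [heq]; exact hidxmem (f q)
      exact hpq (hfinj (hss h1 h2))
    rcases hrev with ⟨ht3, hs1, ha, hb⟩ | ⟨htc, hs2, ha, hb⟩ | ⟨hpair, ha, hb⟩ | ⟨hpair, ha, hb⟩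
    · -- reversal of A 2 → A 3 : index 2 has no out-arcs, so it never occurs
      have h2none : ∀ p : ZMod (c+2), idx (f p) ≠ 2 := by
        intro p hp
        rcases hgstep' p with ⟨⟨hna, hnb⟩, harc1, hpair1⟩ | ⟨⟨hb', ha'⟩, _⟩
        · rcases harc1 with hup | hdn
          · exact hna ⟨by omega, by omega⟩
          · have := hglo (p+1); omega
        · omega
      refine no_walk hc hm hs hst ht (g := fun p => idx (f p)) hglo hghi ?_ hgrep
      intro p
      rcases hgstep' p with ⟨_, hq⟩ | ⟨⟨hb', ha'⟩, _⟩
      · exact hq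
      · exact absurd (by omega : idx (f (p+1)) = 2) (h2none (p+1))
    · -- reversal of A 1 → A 2 : index 1 has no out-arcs
      have h1none : ∀ p : ZMod (c+2), idx (f p) ≠ 1 := by
        intro p hp
        rcases hgstep' p with ⟨⟨hna, hnb⟩, harc1, hpair1⟩ | ⟨⟨hb', ha'⟩, _⟩
        · rcases harc1 with hup | hdn
          · exact hna ⟨by omega, by omega⟩
          · have := hglo (p+1); omega
        · omega
      refine no_walk hc hm hs hst ht (g := fun p => idx (f p)) hglo hghi ?_ hgrep
      intro p
      rcases hgstep' p with ⟨_, hq⟩ | ⟨⟨hb', ha'⟩, _⟩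
      · exact hq
      · exact absurd (by omega : idx (f (p+1)) = 1) (h1none (p+1))
    · -- reversal of A (m-2) → A (m-1) : index m-1 has no in-arcs
      have hm1none : ∀ p : ZMod (c+2), idx (f p) ≠ m - 1 := by
        intro p hp
        have hstp := hgstep' (p - 1)
        have hP : (p - 1) + 1 = p := by ring
        rw [hP] at hstp
        rcases hstp with ⟨⟨hna, hnb⟩, harc1, hpair1⟩ | ⟨⟨hb', ha'⟩, _⟩
        · rcases harc1 with hup | hdn
          · exact hna ⟨by omega, by omega⟩
          · have := hghi (p - 1); omega
        · omega
      refine no_walk hc hm hs hst ht (g := fun p => idx (f p)) hglo hghi ?_ hgrep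
      intro p
      rcases hgstep' p with ⟨_, hq⟩ | ⟨⟨hb', ha'⟩, _⟩
      · exact hq
      · exact absurd (by omega : idx (f p) = m - 1) (hm1none p)
    · -- reversal of A (m-1) → A m : index m has no in-arcs
      have hmnone : ∀ p : ZMod (c+2), idx (f p) ≠ m := by
        intro p hp
        have hstp := hgstep' (p - 1)
        have hP : (p - 1) + 1 = p := by ring
        rw [hP] at hstp
        rcases hstp with ⟨⟨hna, hnb⟩, harc1, hpair1⟩ | ⟨⟨hb', ha'⟩, _⟩
        · rcases harc1 with hup | hdn
          · exact hna ⟨by omega, by omega⟩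
          · have := hghi (p - 1); omega
        · omega
      refine no_walk hc hm hs hst ht (g := fun p => idx (f p)) hglo hghi ?_ hgrep
      intro p
      rcases hgstep' p with ⟨_, hq⟩ | ⟨⟨hb', ha'⟩, _⟩
      · exact hq
      · exact absurd (by omega : idx (f p) = m) (hmnone p)
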